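/- arXiv:1101.5456 — 2 statements merged into one kernel-verified Lean document; each statement's English description precedes it below -/
import Mathlib

section
/- Let f be a rational map of the Riemann sphere of degree d ≥ 2. Then the set of critical points of f, namely {c ∈ OnePoint ℂ | f is injective on no neighborhood of c}, has at most 2d − 2 elements. -/
open Polynomial Set Metric Filter MeasureTheory

noncomputable instance : UniformSpace (OnePoint ℂ) := uniformSpaceOfCompactR1

/-- `f` is a rational map of the Riemann sphere `OnePoint ℂ` of degree `d`:
`f` is continuous and given by `z ↦ P z / Q z` for coprime polynomials `P, Q`,
not both constant, with `Q ≠ 0` and `d = max (natDegree P) (natDegree Q)`. -/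
def IsRationalMap (f : OnePoint ℂ → OnePoint ℂ) (d : ℕ) : Prop :=
  Continuous f ∧ ∃ P Q : Polynomial ℂ, IsCoprime P Q ∧
    ¬(P.natDegree = 0 ∧ Q.natDegree = 0) ∧ Q ≠ 0 ∧ d = max P.natDegree Q.natDegree ∧
    ∀ z : ℂ, Q.eval z ≠ 0 → f (z : OnePoint ℂ) = ((P.eval z / Q.eval z : ℂ) : OnePoint ℂ)

/-- The Fatou set of `f` : the set of points having an open neighbourhood on which the family
of iterates of `f` is equicontinuous (w.r.t. the canonical uniformity of `OnePoint ℂ`). -/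
def FatouSet (f : OnePoint ℂ → OnePoint ℂ) : Set (OnePoint ℂ) :=
  {x | ∃ U : Set (OnePoint ℂ), IsOpen U ∧ x ∈ U ∧ EquicontinuousOn (fun n : ℕ => f^[n]) U}

/-- The Julia set of `f` : the complement of the Fatou set. -/
def JuliaSet (f : OnePoint ℂ → OnePoint ℂ) : Set (OnePoint ℂ) :=
  (FatouSet f)ᶜ

open OnePoint Bornology

/-! ### Auxiliary lemmas -/

lemma exists_injOn_of_strict {g : ℂ → ℂ} {g' z : ℂ} (h : HasStrictDerivAt g g' z)
    (h0 : g' ≠ 0) : ∃ U ∈ nhds z, Set.InjOn g U := by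
  obtain ⟨U, hU, hinv⟩ := (h.hasStrictFDerivAt_equiv h0).eventually_left_inverse.exists_mem
  exact ⟨U, hU, fun x hx y hy hxy => by rw [← hinv x hx, ← hinv y hy, hxy]⟩

lemma eval_reflect_mul {p : Polynomial ℂ} {n : ℕ} (hp : p.natDegree ≤ n) {z : ℂ} (hz : z ≠ 0) :
    eval z⁻¹ (reflect n p) * z ^ n = eval z p := by
  letI := invertibleOfNonzero hz
  have := eval₂_reflect_mul_pow (RingHom.id ℂ) z n p hp
  simpa [invOf_eq_inv, eval₂_id] using this

lemma hasStrictDerivAt_ratio (P Q : Polynomial ℂ) (z : ℂ) (hz : Q.eval z ≠ 0) :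
    HasStrictDerivAt (fun w => P.eval w / Q.eval w)
      ((P.derivative.eval z * Q.eval z - P.eval z * Q.derivative.eval z) / Q.eval z ^ 2) z :=
  (P.hasStrictDerivAt z).div (Q.hasStrictDerivAt z) hz

lemma aux_deg {A B : Polynomial ℂ} {m n : ℕ} (hA : A.natDegree ≤ m + 1) (hB : B.natDegree ≤ n + 1) :
    (A * derivative B - derivative A * B).natDegree ≤ m + n + 1 := by
  apply (natDegree_sub_le _ _).trans
  have h1 := natDegree_derivative_le B
  have h2 := natDegree_derivative_le A
  have h3 := natDegree_mul_le (p := A) (q := derivative B)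
  have h4 := natDegree_mul_le (p := derivative A) (q := B)
  omega

lemma sub_lead_natDegree {P : Polynomial ℂ} {d : ℕ} (hP : P.natDegree ≤ d + 1) :
    (P - C (P.coeff (d+1)) * X ^ (d+1)).natDegree ≤ d := by
  apply natDegree_le_iff_coeff_eq_zero.2
  intro m hm
  simp only [coeff_sub, coeff_C_mul, coeff_X_pow]
  rcases eq_or_ne m (d+1) with rfl | hne
  · simp
  · rw [if_neg hne, mul_zero, sub_zero]
    exact coeff_eq_zero_of_natDegree_lt (by omega)

lemma wronskian_bound (P Q : Polynomial ℂ) (e : ℕ) (hP : P.natDegree ≤ e+2) (hQ : Q.natDegree ≤ e+2) :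
    (P * derivative Q - derivative P * Q).natDegree ≤ 2*e+2 ∧
    (P * derivative Q - derivative P * Q).coeff (2*e+2)
      = P.coeff (e+1) * Q.coeff (e+2) - P.coeff (e+2) * Q.coeff (e+1) := by
  set a := P.coeff (e+2) with ha
  set b := Q.coeff (e+2) with hb
  set P₁ := P - C a * X ^ (e+2) with hP₁
  set Q₁ := Q - C b * X ^ (e+2) with hQ₁
  have hPe : P = P₁ + C a * X ^ (e+2) := by ring
  have hQe : Q = Q₁ + C b * X ^ (e+2) := by ring
  have hdP₁ : P₁.natDegree ≤ e + 1 := sub_lead_natDegree (by omega)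
  have hdQ₁ : Q₁.natDegree ≤ e + 1 := sub_lead_natDegree (by omega)
  have hder : derivative (C a * X ^ (e+2) : Polynomial ℂ) = C (a * (e+2)) * X ^ (e+1) := by
    rw [derivative_C_mul_X_pow]; norm_num
  have hder' : derivative (C b * X ^ (e+2) : Polynomial ℂ) = C (b * (e+2)) * X ^ (e+1) := by
    rw [derivative_C_mul_X_pow]; norm_num
  have hDP : derivative P = derivative P₁ + C (a * (e+2)) * X ^ (e+1) := by
    rw [hPe, derivative_add, hder]
  have hDQ : derivative Q = derivative Q₁ + C (b * (e+2)) * X ^ (e+1) := by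
    rw [hQe, derivative_add, hder']
  have hsplit : P * derivative Q - derivative P * Q
      = (P₁ * derivative Q₁ - derivative P₁ * Q₁)
      + ((P₁ * C (b*(e+2))) * X ^ (e+1) - (derivative P₁ * C b) * X ^ (e+2))
      + ((derivative Q₁ * C a) * X ^ (e+2) - (Q₁ * C (a*(e+2))) * X ^ (e+1)) := by
    rw [hDQ, hDP]; nth_rewrite 1 [hPe]; nth_rewrite 1 [hQe]
    simp only [C_mul]
    ring
  constructor
  · rw [hsplit]
    apply (natDegree_add_le _ _).trans
    have b1 : (P₁ * derivative Q₁ - derivative P₁ * Q₁).natDegree ≤ 2*e+1 := by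
      have := aux_deg (m := e) (n := e) hdP₁ hdQ₁; omega
    have b2 : ((P₁ * C (b*(e+2))) * X ^ (e+1)).natDegree ≤ 2*e+2 := by
      apply natDegree_mul_le.trans
      simp only [natDegree_X_pow]
      have := natDegree_mul_C_le P₁ (b*(e+2) : ℂ)
      omega
    have b3 : ((derivative P₁ * C b) * X ^ (e+2)).natDegree ≤ 2*e+2 := by
      apply natDegree_mul_le.trans
      simp only [natDegree_X_pow]
      have := natDegree_mul_C_le (derivative P₁) (b : ℂ)
      have := natDegree_derivative_le P₁
      omega
    have b4 : ((derivative Q₁ * C a) * X ^ (e+2)).natDegree ≤ 2*e+2 := by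
      apply natDegree_mul_le.trans
      simp only [natDegree_X_pow]
      have := natDegree_mul_C_le (derivative Q₁) (a : ℂ)
      have := natDegree_derivative_le Q₁
      omega
    have b5 : ((Q₁ * C (a*(e+2))) * X ^ (e+1)).natDegree ≤ 2*e+2 := by
      apply natDegree_mul_le.trans
      simp only [natDegree_X_pow]
      have := natDegree_mul_C_le Q₁ (a*(e+2) : ℂ)
      omega
    have b1' : (P₁ * derivative Q₁ - derivative P₁ * Q₁).natDegree ≤ 2*e+2 := by omega
    exact max_le ((natDegree_add_le _ _).trans (max_le b1' ((natDegree_sub_le _ _).trans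
      (max_le b2 b3)))) ((natDegree_sub_le _ _).trans (max_le b4 b5))
  · rw [hsplit]
    have hc1 : (P₁ * derivative Q₁ - derivative P₁ * Q₁).coeff (2*e+2) = 0 := by
      apply coeff_eq_zero_of_natDegree_lt
      have := aux_deg (m := e) (n := e) hdP₁ hdQ₁; omega
    have e1 : (2*e+2) = (e+1) + (e+1) := by ring
    have e2 : (2*e+2) = e + (e+2) := by ring
    have hc2 : ((P₁ * C (b*(e+2))) * X ^ (e+1)).coeff (2*e+2) = P₁.coeff (e+1) * (b*(e+2)) := by
      rw [e1, coeff_mul_X_pow, coeff_mul_C]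
    have hc3 : ((derivative P₁ * C b) * X ^ (e+2)).coeff (2*e+2)
        = P₁.coeff (e+1) * ((e:ℂ)+1) * b := by
      rw [e2, coeff_mul_X_pow, coeff_mul_C, coeff_derivative]
    have hc4 : ((derivative Q₁ * C a) * X ^ (e+2)).coeff (2*e+2)
        = Q₁.coeff (e+1) * ((e:ℂ)+1) * a := by
      rw [e2, coeff_mul_X_pow, coeff_mul_C, coeff_derivative]
    have hc5 : ((Q₁ * C (a*(e+2))) * X ^ (e+1)).coeff (2*e+2) = Q₁.coeff (e+1) * (a*(e+2)) := by
      rw [e1, coeff_mul_X_pow, coeff_mul_C]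
    have hcP : P₁.coeff (e+1) = P.coeff (e+1) := by
      simp only [hP₁, coeff_sub, coeff_C_mul, coeff_X_pow]
      rw [if_neg (by omega), mul_zero, sub_zero]
    have hcQ : Q₁.coeff (e+1) = Q.coeff (e+1) := by
      simp only [hQ₁, coeff_sub, coeff_C_mul, coeff_X_pow]
      rw [if_neg (by omega), mul_zero, sub_zero]
    simp only [coeff_add, coeff_sub, hc1, hc2, hc3, hc4, hc5, hcP, hcQ]
    ring

lemma wron_ne_zero {P Q : Polynomial ℂ} (hco : IsCoprime P Q)
    (hnc : ¬(P.natDegree = 0 ∧ Q.natDegree = 0)) (hQ : Q ≠ 0) :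
    P * derivative Q - derivative P * Q ≠ 0 := by
  intro h
  have h' : P * derivative Q = derivative P * Q := by linear_combination h
  by_cases hQ' : derivative Q = 0
  · have hP' : derivative P = 0 := by
      have h0 : derivative P * Q = 0 := by rw [← h', hQ', mul_zero]
      rcases mul_eq_zero.1 h0 with h1 | h1
      · exact h1
      · exact absurd h1 hQ
    exact hnc ⟨natDegree_eq_zero_of_derivative_eq_zero hP',
      natDegree_eq_zero_of_derivative_eq_zero hQ'⟩
  · have hdvd : Q ∣ derivative Q :=
      hco.symm.dvd_of_dvd_mul_left (⟨derivative P, by linear_combination h⟩ : Q ∣ P * derivative Q)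
    have h1 : Q.natDegree ≤ (derivative Q).natDegree := natDegree_le_of_dvd hdvd hQ'
    have h2 : (derivative Q).natDegree < Q.natDegree := by
      apply natDegree_derivative_lt
      intro h0
      exact hQ' (derivative_of_natDegree_zero h0)
    omega

lemma coprime_eval_ne_zero {P Q : Polynomial ℂ} (hco : IsCoprime P Q) {z : ℂ}
    (hz : Q.eval z = 0) : P.eval z ≠ 0 := by
  obtain ⟨u, v, huv⟩ := hco
  intro h
  have := congrArg (eval z) huv
  simp [h, hz] at this

lemma tendsto_coe_ratio_infty {g : ℂ → ℂ} {l : Filter ℂ}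
    (h0 : Tendsto (fun z => (g z)⁻¹) l (nhds 0)) (hne : ∀ᶠ z in l, g z ≠ 0) :
    Tendsto (fun z => ((g z : ℂ) : OnePoint ℂ)) l (nhds (∞ : OnePoint ℂ)) := by
  have h1 : Tendsto g l (Bornology.cobounded ℂ) := by
    rw [← tendsto_norm_atTop_iff_cobounded]
    have hm : Tendsto (fun z => ‖(g z)⁻¹‖) l (nhdsWithin 0 (Set.Ioi 0)) := by
      apply tendsto_nhdsWithin_iff.2
      constructor
      · simpa using h0.norm
      · filter_upwards [hne] with z hz
        simp [Set.mem_Ioi, norm_pos_iff, hz]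
    have := hm.inv_tendsto_nhdsGT_zero
    have heq : (fun z => ‖(g z)⁻¹‖)⁻¹ = fun z => ‖g z‖ := by
      funext z; simp [norm_inv]
    rwa [heq] at this
  have h2 : Tendsto g l (coclosedCompact ℂ) := by
    rwa [Filter.coclosedCompact_eq_cocompact, ← cobounded_eq_cocompact]
  exact OnePoint.tendsto_coe_infty.comp h2

theorem encard_criticalPoints_le
    (f : OnePoint ℂ → OnePoint ℂ) (d : ℕ) (hd : 2 ≤ d) (hf : IsRationalMap f d) :
    {c : OnePoint ℂ | ∀ V ∈ nhds c, ¬ Set.InjOn f V}.encard ≤ (2 * d - 2 : ℕ) := by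
  obtain ⟨hfc, P, Q, hco, hnc, hQ0, hdeg, heval⟩ := hf
  obtain ⟨e, rfl⟩ : ∃ e, d = e + 2 := ⟨d - 2, by omega⟩
  have hP0 : P ≠ 0 := by
    rintro rfl
    exact hnc ⟨natDegree_zero, natDegree_eq_zero_of_isUnit (isCoprime_zero_left.1 hco)⟩
  have hPd : P.natDegree ≤ e + 2 := hdeg ▸ le_max_left _ _
  have hQd : Q.natDegree ≤ e + 2 := hdeg ▸ le_max_right _ _
  set W := P * derivative Q - derivative P * Q with hW
  have hWne : W ≠ 0 := wron_ne_zero hco hnc hQ0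
  obtain ⟨hWdeg, hWcoeff⟩ := wronskian_bound P Q e hPd hQd
  set c := P.coeff (e+1) * Q.coeff (e+2) - P.coeff (e+2) * Q.coeff (e+1) with hcdef
  -- local injectivity at finite non-critical points of W
  have key : ∀ z : ℂ, W.eval z ≠ 0 → ∃ V ∈ nhds ((z : ℂ) : OnePoint ℂ), Set.InjOn f V := by
    intro z hWz
    by_cases hQz : Q.eval z = 0
    · -- pole
      have hPz : P.eval z ≠ 0 := coprime_eval_ne_zero hco hQz
      have hstrict := hasStrictDerivAt_ratio Q P z hPz
      have hne : (Q.derivative.eval z * P.eval z - Q.eval z * P.derivative.eval z)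
          / P.eval z ^ 2 ≠ 0 := by
        have hnum : Q.derivative.eval z * P.eval z - Q.eval z * P.derivative.eval z
            = W.eval z := by
          rw [hW]; simp only [eval_sub, eval_mul]; rw [hQz]; ring
        rw [hnum]; exact div_ne_zero hWz (pow_ne_zero _ hPz)
      obtain ⟨U, hU, hinj⟩ := exists_injOn_of_strict hstrict hne
      have hPopen : {w : ℂ | P.eval w ≠ 0} ∈ nhds z :=
        (isOpen_compl_singleton.preimage P.continuous).mem_nhds hPz
      have hQiso : {w : ℂ | w ≠ z → Q.eval w ≠ 0} ∈ nhds z := by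
        have hfin : ({w : ℂ | Q.IsRoot w} \ {z}).Finite :=
          (Q.finite_setOf_isRoot hQ0).subset diff_subset
        have : ({w : ℂ | Q.IsRoot w} \ {z})ᶜ ∈ nhds z :=
          hfin.isClosed.isOpen_compl.mem_nhds (by simp)
        filter_upwards [this] with w hw hwz
        intro hQw
        exact hw ⟨hQw, hwz⟩
      have hV₀ : U ∩ ({w : ℂ | P.eval w ≠ 0} ∩ {w : ℂ | w ≠ z → Q.eval w ≠ 0}) ∈ nhds z :=
        inter_mem hU (inter_mem hPopen hQiso)
      set V₀ := U ∩ ({w : ℂ | P.eval w ≠ 0} ∩ {w : ℂ | w ≠ z → Q.eval w ≠ 0}) with hV₀def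
      -- value at the pole is ∞
      have hfz : f ((z : ℂ) : OnePoint ℂ) = ∞ := by
        have hcont : Tendsto (fun w : ℂ => f ↑w) (nhdsWithin z {z}ᶜ) (nhds (f ↑z)) :=
          ((hfc.comp OnePoint.continuous_coe).tendsto z).mono_left nhdsWithin_le_nhds
        have hgt : Tendsto (fun w : ℂ => ((P.eval w / Q.eval w : ℂ) : OnePoint ℂ))
            (nhdsWithin z {z}ᶜ) (nhds (∞ : OnePoint ℂ)) := by
          apply tendsto_coe_ratio_infty
          · have t1 : Tendsto (fun w : ℂ => Q.eval w / P.eval w) (nhds z)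
                (nhds (Q.eval z / P.eval z)) :=
              (Q.continuous.continuousAt.div P.continuous.continuousAt hPz)
            rw [hQz, zero_div] at t1
            have heq2 : (fun w : ℂ => (P.eval w / Q.eval w)⁻¹)
                = fun w => Q.eval w / P.eval w := by
              funext w; rw [inv_div]
            rw [heq2]
            exact t1.mono_left nhdsWithin_le_nhds
          · filter_upwards [mem_nhdsWithin_of_mem_nhds hV₀, self_mem_nhdsWithin]
              with w hw hwz
            exact div_ne_zero hw.2.1 (hw.2.2 hwz)
        have heq : (fun w : ℂ => f ↑w)
            =ᶠ[nhdsWithin z {z}ᶜ] fun w : ℂ => ((P.eval w / Q.eval w : ℂ) : OnePoint ℂ) := by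
          filter_upwards [mem_nhdsWithin_of_mem_nhds hV₀, self_mem_nhdsWithin] with w hw hwz
          exact heval w (hw.2.2 hwz)
        exact tendsto_nhds_unique (hcont.congr' heq) hgt
      refine ⟨(fun w : ℂ => (w : OnePoint ℂ)) '' V₀, ?_, ?_⟩
      · rw [OnePoint.nhds_coe_eq]; exact image_mem_map hV₀
      · rintro x ⟨u, hu, rfl⟩ y ⟨v, hv, rfl⟩ hxy
        obtain ⟨hu1, hu2, hu3⟩ := hu
        obtain ⟨hv1, hv2, hv3⟩ := hv
        rcases eq_or_ne u z with hu0 | hu0 <;> rcases eq_or_ne v z with hv0 | hv0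
        · rw [hu0, hv0]
        · rw [hu0] at hxy
          rw [hfz, heval v (hv3 hv0)] at hxy
          exact absurd hxy.symm (OnePoint.coe_ne_infty _)
        · rw [hv0] at hxy
          rw [hfz, heval u (hu3 hu0)] at hxy
          exact absurd hxy (OnePoint.coe_ne_infty _)
        · rw [heval u (hu3 hu0), heval v (hv3 hv0)] at hxy
          have hg : P.eval u / Q.eval u = P.eval v / Q.eval v := OnePoint.coe_eq_coe.1 hxy
          have hk : Q.eval u / P.eval u = Q.eval v / P.eval v := by
            rw [← inv_div (P.eval u) (Q.eval u), ← inv_div (P.eval v) (Q.eval v), hg]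
          exact congrArg _ (hinj hu1 hv1 hk)
    · -- regular point
      have hstrict := hasStrictDerivAt_ratio P Q z hQz
      have hne : (P.derivative.eval z * Q.eval z - P.eval z * Q.derivative.eval z)
          / Q.eval z ^ 2 ≠ 0 := by
        apply div_ne_zero ?_ (pow_ne_zero _ hQz)
        intro h
        apply hWz
        have heq0 : W.eval z
            = -(P.derivative.eval z * Q.eval z - P.eval z * Q.derivative.eval z) := by
          rw [hW]; simp only [eval_sub, eval_mul]; ring
        rw [heq0, h, neg_zero]
      obtain ⟨U, hU, hinj⟩ := exists_injOn_of_strict hstrict hne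
      have hQopen : {w : ℂ | Q.eval w ≠ 0} ∈ nhds z :=
        (isOpen_compl_singleton.preimage Q.continuous).mem_nhds hQz
      refine ⟨(fun w : ℂ => (w : OnePoint ℂ)) '' (U ∩ {w : ℂ | Q.eval w ≠ 0}), ?_, ?_⟩
      · rw [OnePoint.nhds_coe_eq]; exact image_mem_map (inter_mem hU hQopen)
      · rintro x ⟨u, ⟨hu1, hu2⟩, rfl⟩ y ⟨v, ⟨hv1, hv2⟩, rfl⟩ hxy
        rw [heval u hu2, heval v hv2] at hxy
        exact congrArg _ (hinj hu1 hv1 (OnePoint.coe_eq_coe.1 hxy))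
  -- local injectivity at ∞ when c ≠ 0
  have keyinf : c ≠ 0 → ∃ V ∈ nhds (∞ : OnePoint ℂ), Set.InjOn f V := by
    intro hc
    set A := reflect (e+2) P with hA
    set B := reflect (e+2) Q with hB
    have hA0 : A.eval 0 = P.coeff (e+2) := by
      rw [← coeff_zero_eq_eval_zero, hA, coeff_reflect, revAt_le (by omega)]
      norm_num
    have hB0 : B.eval 0 = Q.coeff (e+2) := by
      rw [← coeff_zero_eq_eval_zero, hB, coeff_reflect, revAt_le (by omega)]
      norm_num
    have hA1 : (derivative A).eval 0 = P.coeff (e+1) := by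
      rw [← coeff_zero_eq_eval_zero, coeff_derivative, hA, coeff_reflect, revAt_le (by omega)]
      norm_num
    have hB1 : (derivative B).eval 0 = Q.coeff (e+1) := by
      rw [← coeff_zero_eq_eval_zero, coeff_derivative, hB, coeff_reflect, revAt_le (by omega)]
      norm_num
    -- a bound outside of which everything is tame
    obtain ⟨R, hRsub⟩ :=
      (((Q.finite_setOf_isRoot hQ0).union (P.finite_setOf_isRoot hP0)).isBounded).subset_closedBall
        (0 : ℂ)
    by_cases hb : Q.coeff (e+2) = 0
    · -- `f ∞ = ∞`; use the chart `k = B / A`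
      have haP : P.coeff (e+2) ≠ 0 := by
        intro haP
        have h1 : P.natDegree ≠ e + 2 := fun hh => hP0 (leadingCoeff_eq_zero.1 (by
          rw [leadingCoeff, hh]; exact haP))
        have h2 : Q.natDegree ≠ e + 2 := fun hh => hQ0 (leadingCoeff_eq_zero.1 (by
          rw [leadingCoeff, hh]; exact hb))
        omega
      have hb1 : Q.coeff (e+1) ≠ 0 := by
        intro h; apply hc; rw [hcdef, hb, h]; ring
      have hA0' : A.eval 0 ≠ 0 := by rw [hA0]; exact haP
      have hstrict := hasStrictDerivAt_ratio B A 0 hA0'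
      have hne : (B.derivative.eval 0 * A.eval 0 - B.eval 0 * A.derivative.eval 0)
          / A.eval 0 ^ 2 ≠ 0 := by
        rw [hA0, hB0, hA1, hB1, hb]
        apply div_ne_zero ?_ (pow_ne_zero _ haP)
        simpa using mul_ne_zero hb1 haP
      obtain ⟨U, hU, hinj⟩ := exists_injOn_of_strict hstrict hne
      obtain ⟨ε, hε, hball⟩ := Metric.mem_nhds_iff.1 hU
      set M := max R ε⁻¹ with hM
      have hbig : ∀ u : ℂ, u ∈ (closedBall (0:ℂ) M)ᶜ →
          u ≠ 0 ∧ Q.eval u ≠ 0 ∧ P.eval u ≠ 0 ∧ u⁻¹ ∈ U := by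
        intro u hu
        have hMu : M < ‖u‖ := by
          simp only [mem_compl_iff, Metric.mem_closedBall, dist_zero_right, not_le] at hu
          exact hu
        have hεM : ε⁻¹ ≤ M := le_max_right _ _
        have hupos : (0:ℝ) < ‖u‖ := lt_of_le_of_lt (le_trans (inv_pos.2 hε).le hεM) hMu
        have hu0 : u ≠ 0 := norm_pos_iff.1 hupos
        have hQu : Q.eval u ≠ 0 := by
          intro h
          have : u ∈ closedBall (0:ℂ) R := hRsub (Or.inl h)
          rw [Metric.mem_closedBall, dist_zero_right] at this
          have : R ≤ M := le_max_left _ _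
          linarith [hMu, ‹‖u‖ ≤ R›]
        have hPu : P.eval u ≠ 0 := by
          intro h
          have : u ∈ closedBall (0:ℂ) R := hRsub (Or.inr h)
          rw [Metric.mem_closedBall, dist_zero_right] at this
          have : R ≤ M := le_max_left _ _
          linarith [hMu, ‹‖u‖ ≤ R›]
        refine ⟨hu0, hQu, hPu, hball ?_⟩
        rw [Metric.mem_ball, dist_zero_right, norm_inv]
        exact (inv_lt_comm₀ hupos hε).2 (lt_of_le_of_lt hεM hMu)
      -- the chart identity
      have hchart : ∀ u : ℂ, u ≠ 0 →
          B.eval u⁻¹ / A.eval u⁻¹ = Q.eval u / P.eval u := by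
        intro u hu0
        rw [← eval_reflect_mul hPd hu0, ← eval_reflect_mul hQd hu0,
          mul_div_mul_right _ _ (pow_ne_zero _ hu0)]
      -- value at ∞
      have hfinf : f ∞ = ∞ := by
        have h1 : Tendsto (fun z : ℂ => f ↑z) (coclosedCompact ℂ) (nhds (f ∞)) :=
          OnePoint.continuousAt_infty'.1 hfc.continuousAt
        have hmem : (closedBall (0:ℂ) M)ᶜ ∈ coclosedCompact ℂ :=
          hasBasis_coclosedCompact.mem_of_mem ⟨Metric.isClosed_closedBall, isCompact_closedBall _ _⟩
        have h2 : Tendsto (fun z : ℂ => ((P.eval z / Q.eval z : ℂ) : OnePoint ℂ))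
            (coclosedCompact ℂ) (nhds (∞ : OnePoint ℂ)) := by
          apply tendsto_coe_ratio_infty
          · have t0 : Tendsto (fun z : ℂ => z⁻¹) (coclosedCompact ℂ) (nhds 0) := by
              rw [Filter.coclosedCompact_eq_cocompact, ← cobounded_eq_cocompact]
              exact tendsto_inv₀_cobounded
            have t1 : Tendsto (fun w : ℂ => B.eval w / A.eval w) (nhds 0)
                (nhds (B.eval 0 / A.eval 0)) :=
              B.continuous.continuousAt.div A.continuous.continuousAt hA0'
            have hk0 : B.eval 0 / A.eval 0 = 0 := by rw [hB0, hb, zero_div]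
            rw [hk0] at t1
            have t2 := t1.comp t0
            apply t2.congr'
            filter_upwards [hmem] with u hu
            have h := hbig u hu
            simp only [Function.comp]
            rw [hchart u h.1, inv_div]
          · filter_upwards [hmem] with u hu
            exact div_ne_zero (hbig u hu).2.2.1 (hbig u hu).2.1
        have heq : (fun z : ℂ => f ↑z)
            =ᶠ[coclosedCompact ℂ] fun z : ℂ => ((P.eval z / Q.eval z : ℂ) : OnePoint ℂ) := by
          filter_upwards [hmem] with u hu
          exact heval u (hbig u hu).2.1
        exact tendsto_nhds_unique (h1.congr' heq) h2
      refine ⟨(fun z : ℂ => (z : OnePoint ℂ)) '' (closedBall (0:ℂ) M)ᶜ ∪ {∞},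
        OnePoint.hasBasis_nhds_infty.mem_of_mem ⟨Metric.isClosed_closedBall, isCompact_closedBall _ _⟩, ?_⟩
      rintro x (⟨u, hu, rfl⟩ | hx) y (⟨v, hv, rfl⟩ | hy) hxy
      · obtain ⟨hu0, hQu, hPu, hUu⟩ := hbig u hu
        obtain ⟨hv0, hQv, hPv, hUv⟩ := hbig v hv
        rw [heval u hQu, heval v hQv] at hxy
        have hg : P.eval u / Q.eval u = P.eval v / Q.eval v := OnePoint.coe_eq_coe.1 hxy
        have hk : B.eval u⁻¹ / A.eval u⁻¹ = B.eval v⁻¹ / A.eval v⁻¹ := by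
          rw [hchart u hu0, hchart v hv0, ← inv_div (P.eval u) (Q.eval u),
            ← inv_div (P.eval v) (Q.eval v), hg]
        have := hinj hUu hUv hk
        rw [inv_inj] at this
        rw [this]
      · exfalso
        rw [mem_singleton_iff] at hy; subst hy
        obtain ⟨hu0, hQu, hPu, hUu⟩ := hbig u hu
        rw [heval u hQu, hfinf] at hxy
        exact OnePoint.coe_ne_infty _ hxy
      · exfalso
        rw [mem_singleton_iff] at hx; subst hx
        obtain ⟨hv0, hQv, hPv, hUv⟩ := hbig v hv
        rw [heval v hQv, hfinf] at hxy
        exact OnePoint.coe_ne_infty _ hxy.symm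
      · rw [mem_singleton_iff] at hx hy; rw [hx, hy]
    · -- `f ∞` is finite; use the chart `h = A / B`
      have hB0' : B.eval 0 ≠ 0 := by rw [hB0]; exact hb
      have hstrict := hasStrictDerivAt_ratio A B 0 hB0'
      have hne : (A.derivative.eval 0 * B.eval 0 - A.eval 0 * B.derivative.eval 0)
          / B.eval 0 ^ 2 ≠ 0 := by
        rw [hA0, hB0, hA1, hB1]
        exact div_ne_zero hc (pow_ne_zero _ hb)
      obtain ⟨U, hU, hinj⟩ := exists_injOn_of_strict hstrict hne
      have h0U : (0:ℂ) ∈ U := mem_of_mem_nhds hU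
      obtain ⟨ε, hε, hball⟩ := Metric.mem_nhds_iff.1 hU
      set M := max R ε⁻¹ with hM
      have hbig : ∀ u : ℂ, u ∈ (closedBall (0:ℂ) M)ᶜ →
          u ≠ 0 ∧ Q.eval u ≠ 0 ∧ P.eval u ≠ 0 ∧ u⁻¹ ∈ U := by
        intro u hu
        have hMu : M < ‖u‖ := by
          simp only [mem_compl_iff, Metric.mem_closedBall, dist_zero_right, not_le] at hu
          exact hu
        have hεM : ε⁻¹ ≤ M := le_max_right _ _
        have hupos : (0:ℝ) < ‖u‖ := lt_of_le_of_lt (le_trans (inv_pos.2 hε).le hεM) hMu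
        have hu0 : u ≠ 0 := norm_pos_iff.1 hupos
        have hQu : Q.eval u ≠ 0 := by
          intro h
          have : u ∈ closedBall (0:ℂ) R := hRsub (Or.inl h)
          rw [Metric.mem_closedBall, dist_zero_right] at this
          have : R ≤ M := le_max_left _ _
          linarith [hMu, ‹‖u‖ ≤ R›]
        have hPu : P.eval u ≠ 0 := by
          intro h
          have : u ∈ closedBall (0:ℂ) R := hRsub (Or.inr h)
          rw [Metric.mem_closedBall, dist_zero_right] at this
          have : R ≤ M := le_max_left _ _
          linarith [hMu, ‹‖u‖ ≤ R›]
        refine ⟨hu0, hQu, hPu, hball ?_⟩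
        rw [Metric.mem_ball, dist_zero_right, norm_inv]
        exact (inv_lt_comm₀ hupos hε).2 (lt_of_le_of_lt hεM hMu)
      have hchart : ∀ u : ℂ, u ≠ 0 →
          A.eval u⁻¹ / B.eval u⁻¹ = P.eval u / Q.eval u := by
        intro u hu0
        rw [← eval_reflect_mul hPd hu0, ← eval_reflect_mul hQd hu0,
          mul_div_mul_right _ _ (pow_ne_zero _ hu0)]
      have hmem : (closedBall (0:ℂ) M)ᶜ ∈ coclosedCompact ℂ :=
        hasBasis_coclosedCompact.mem_of_mem ⟨Metric.isClosed_closedBall, isCompact_closedBall _ _⟩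
      -- value at ∞
      have hfinf : f ∞ = ((A.eval 0 / B.eval 0 : ℂ) : OnePoint ℂ) := by
        have h1 : Tendsto (fun z : ℂ => f ↑z) (coclosedCompact ℂ) (nhds (f ∞)) :=
          OnePoint.continuousAt_infty'.1 hfc.continuousAt
        have t0 : Tendsto (fun z : ℂ => z⁻¹) (coclosedCompact ℂ) (nhds 0) := by
          rw [Filter.coclosedCompact_eq_cocompact, ← cobounded_eq_cocompact]
          exact tendsto_inv₀_cobounded
        have t1 : Tendsto (fun w : ℂ => A.eval w / B.eval w) (nhds 0)
            (nhds (A.eval 0 / B.eval 0)) :=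
          A.continuous.continuousAt.div B.continuous.continuousAt hB0'
        have t2 : Tendsto (fun z : ℂ => ((A.eval z⁻¹ / B.eval z⁻¹ : ℂ) : OnePoint ℂ))
            (coclosedCompact ℂ) (nhds ((A.eval 0 / B.eval 0 : ℂ) : OnePoint ℂ)) :=
          (OnePoint.continuous_coe.tendsto _).comp (t1.comp t0)
        have heq : (fun z : ℂ => f ↑z)
            =ᶠ[coclosedCompact ℂ] fun z : ℂ => ((A.eval z⁻¹ / B.eval z⁻¹ : ℂ) : OnePoint ℂ) := by
          filter_upwards [hmem] with u hu
          rw [heval u (hbig u hu).2.1, hchart u (hbig u hu).1]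
        exact tendsto_nhds_unique (h1.congr' heq) t2
      refine ⟨(fun z : ℂ => (z : OnePoint ℂ)) '' (closedBall (0:ℂ) M)ᶜ ∪ {∞},
        OnePoint.hasBasis_nhds_infty.mem_of_mem ⟨Metric.isClosed_closedBall, isCompact_closedBall _ _⟩, ?_⟩
      rintro x (⟨u, hu, rfl⟩ | hx) y (⟨v, hv, rfl⟩ | hy) hxy
      · obtain ⟨hu0, hQu, hPu, hUu⟩ := hbig u hu
        obtain ⟨hv0, hQv, hPv, hUv⟩ := hbig v hv
        rw [heval u hQu, heval v hQv] at hxy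
        have hg : P.eval u / Q.eval u = P.eval v / Q.eval v := OnePoint.coe_eq_coe.1 hxy
        have hk : A.eval u⁻¹ / B.eval u⁻¹ = A.eval v⁻¹ / B.eval v⁻¹ := by
          rw [hchart u hu0, hchart v hv0, hg]
        have := hinj hUu hUv hk
        rw [inv_inj] at this
        rw [this]
      · exfalso
        rw [mem_singleton_iff] at hy; subst hy
        obtain ⟨hu0, hQu, hPu, hUu⟩ := hbig u hu
        rw [heval u hQu, hfinf] at hxy
        have hg : P.eval u / Q.eval u = A.eval 0 / B.eval 0 := OnePoint.coe_eq_coe.1 hxy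
        have hk : A.eval u⁻¹ / B.eval u⁻¹ = A.eval 0 / B.eval 0 := by
          rw [hchart u hu0, hg]
        have := hinj hUu h0U hk
        exact hu0 (inv_eq_zero.1 this)
      · exfalso
        rw [mem_singleton_iff] at hx; subst hx
        obtain ⟨hv0, hQv, hPv, hUv⟩ := hbig v hv
        rw [heval v hQv, hfinf] at hxy
        have hg : A.eval 0 / B.eval 0 = P.eval v / Q.eval v := OnePoint.coe_eq_coe.1 hxy
        have hk : A.eval v⁻¹ / B.eval v⁻¹ = A.eval 0 / B.eval 0 := by
          rw [hchart v hv0, hg]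
        have := hinj hUv h0U hk
        exact hv0 (inv_eq_zero.1 this)
      · rw [mem_singleton_iff] at hx hy; rw [hx, hy]
  -- counting
  have harith : (2 * (e + 2) - 2 : ℕ) = 2*e+2 := by omega
  rw [harith]
  set Z : Set ℂ := {z : ℂ | W.eval z = 0} with hZdef
  have hZcard : Z.encard ≤ (W.natDegree : ℕ∞) := by
    have hZeq : Z = (W.roots.toFinset : Set ℂ) := by
      ext z
      simp [hZdef, Multiset.mem_toFinset, mem_roots', hWne, IsRoot]
    rw [hZeq, Set.encard_coe_eq_coe_finsetCard]
    exact_mod_cast (Multiset.toFinset_card_le _).trans (card_roots' W)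
  have himg : ((fun z : ℂ => (z : OnePoint ℂ)) '' Z).encard = Z.encard :=
    Set.InjOn.encard_image (fun a _ b _ h => OnePoint.coe_eq_coe.1 h)
  by_cases hc : c = 0
  · -- W has degree ≤ 2e+1; count roots plus ∞
    have hWdeg' : W.natDegree ≤ 2*e+1 := by
      rcases Nat.lt_or_ge W.natDegree (2*e+2) with h | h
      · omega
      · exfalso
        have : W.natDegree = 2*e+2 := le_antisymm hWdeg h
        apply hWne
        apply leadingCoeff_eq_zero.1
        rw [leadingCoeff, this, hW, hWcoeff]
        exact hc
    have hsub : {x : OnePoint ℂ | ∀ V ∈ nhds x, ¬ Set.InjOn f V}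
        ⊆ insert ∞ ((fun z : ℂ => (z : OnePoint ℂ)) '' Z) := by
      intro x hx
      by_contra hxS
      simp only [mem_insert_iff, not_or] at hxS
      obtain ⟨hx1, hx2⟩ := hxS
      induction x using OnePoint.rec with
      | infty => exact hx1 rfl
      | coe z =>
        have hWz : W.eval z ≠ 0 := fun h => hx2 ⟨z, h, rfl⟩
        obtain ⟨V, hV, hVinj⟩ := key z hWz
        exact hx V hV hVinj
    calc {x : OnePoint ℂ | ∀ V ∈ nhds x, ¬ Set.InjOn f V}.encard
        ≤ (insert ∞ ((fun z : ℂ => (z : OnePoint ℂ)) '' Z)).encard := Set.encard_mono hsub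
      _ ≤ ((fun z : ℂ => (z : OnePoint ℂ)) '' Z).encard + 1 := Set.encard_insert_le _ _
      _ = Z.encard + 1 := by rw [himg]
      _ ≤ (W.natDegree : ℕ∞) + 1 := by exact add_le_add_left hZcard 1
      _ ≤ ((2*e+1 : ℕ) : ℕ∞) + 1 := by
          exact add_le_add_left (by exact_mod_cast hWdeg') 1
      _ ≤ ((2*e+2 : ℕ) : ℕ∞) := by
          norm_cast
  · -- ∞ is not critical; count roots only
    have hsub : {x : OnePoint ℂ | ∀ V ∈ nhds x, ¬ Set.InjOn f V}
        ⊆ (fun z : ℂ => (z : OnePoint ℂ)) '' Z := by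
      intro x hx
      by_contra hx2
      induction x using OnePoint.rec with
      | infty =>
        obtain ⟨V, hV, hVinj⟩ := keyinf hc
        exact hx V hV hVinj
      | coe z =>
        have hWz : W.eval z ≠ 0 := fun h => hx2 ⟨z, h, rfl⟩
        obtain ⟨V, hV, hVinj⟩ := key z hWz
        exact hx V hV hVinj
    calc {x : OnePoint ℂ | ∀ V ∈ nhds x, ¬ Set.InjOn f V}.encard
        ≤ ((fun z : ℂ => (z : OnePoint ℂ)) '' Z).encard := Set.encard_mono hsub
      _ = Z.encard := himg
      _ ≤ (W.natDegree : ℕ∞) := hZcard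
      _ ≤ ((2*e+2 : ℕ) : ℕ∞) := by exact_mod_cast hWdeg
end

section
/- (Hölder continuity of the Cauchy-type operator P) Fix a real number p > 2. There exists a constant K_p > 0, depending only on p, such that for every measurable function h : ℂ → ℂ with finite L^p norm ‖h‖_p with respect to Lebesgue (volume) measure on ℂ, the function Ph defined by Ph(ζ) = −(1/π) ∫_ℂ h(z) (1/(z − ζ) − 1/z) dA(z) satisfies, for all ζ₁, ζ₂ ∈ ℂ, the Hölder estimate |Ph(ζ₁) − Ph(ζ₂)| ≤ K_p ‖h‖_p |ζ₁ − ζ₂|^{1 − 2/p}; in particular the defining integral converges absolutely for every ζ ∈ ℂ. -/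
open Polynomial Set Metric Filter MeasureTheory


noncomputable def sphC : ENNReal := (volume : Measure ℂ).toSphere univ

lemma sphC_ne_top : sphC ≠ ⊤ := (measure_lt_top _ _).ne

lemma lintegral_radial (f : ℝ → ENNReal) (hf : Measurable f) :
    ∫⁻ z : ℂ, f ‖z‖ = sphC * ∫⁻ r in Ioi (0:ℝ), ENNReal.ofReal r * f r := by
  have h1 : Module.finrank ℝ ℂ - 1 = 1 := by rw [Complex.finrank_real_complex]
  have hmp := (volume : Measure ℂ).measurePreserving_homeomorphUnitSphereProd
  rw [h1] at hmp
  have hm2 : Measurable fun y : sphere (0:ℂ) 1 × Ioi (0:ℝ) => f y.2.1 :=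
    hf.comp (measurable_subtype_coe.comp measurable_snd)
  calc ∫⁻ z : ℂ, f ‖z‖
      = ∫⁻ z : ℂ in {(0:ℂ)}ᶜ, f ‖z‖ := by rw [restrict_compl_singleton]
    _ = ∫⁻ x : ({(0:ℂ)}ᶜ : Set ℂ), f ‖(x:ℂ)‖ ∂(Measure.comap Subtype.val volume) :=
        (lintegral_subtype_comap (measurableSet_singleton (0:ℂ)).compl
          (fun z : ℂ => f ‖z‖)).symm
    _ = ∫⁻ y : sphere (0:ℂ) 1 × Ioi (0:ℝ), f y.2
          ∂((volume : Measure ℂ).toSphere.prod (Measure.volumeIoiPow 1)) := by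
        rw [← hmp.lintegral_comp hm2]
        exact lintegral_congr fun x => by rw [homeomorphUnitSphereProd_apply_snd_coe]
    _ = sphC * ∫⁻ r : Ioi (0:ℝ), f r ∂(Measure.volumeIoiPow 1) := by
        rw [lintegral_prod _ hm2.aemeasurable]
        simp [lintegral_const, sphC, mul_comm]
    _ = sphC * ∫⁻ r in Ioi (0:ℝ), ENNReal.ofReal r * f r := by
        congr 1
        rw [Measure.volumeIoiPow,
          lintegral_withDensity_eq_lintegral_mul (g := fun r : Ioi (0:ℝ) => f r.1) _
            ((measurable_subtype_coe.pow_const 1).ennreal_ofReal)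
            (hf.comp measurable_subtype_coe)]
        rw [← lintegral_subtype_comap measurableSet_Ioi
          (fun r : ℝ => ENNReal.ofReal r * f r)]
        exact lintegral_congr fun x => by simp

lemma lint_ball_le {s R : ℝ} (hs : 0 < s) (hs2 : s < 2) (hR : 0 < R) :
    ∫⁻ z in ball (0:ℂ) R, ENNReal.ofReal (‖z‖ ^ (-s)) ≤
      sphC * ENNReal.ofReal (R ^ (2-s) / (2-s)) := by
  have hfm : Measurable ((Iio R).indicator (fun r : ℝ => ENNReal.ofReal (r ^ (-s)))) :=
    Measurable.indicator (by fun_prop) measurableSet_Iio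
  have h1 : ∫⁻ z in ball (0:ℂ) R, ENNReal.ofReal (‖z‖ ^ (-s)) =
      ∫⁻ z : ℂ, (Iio R).indicator (fun r : ℝ => ENNReal.ofReal (r ^ (-s))) ‖z‖ := by
    rw [← lintegral_indicator measurableSet_ball]
    refine lintegral_congr fun z => ?_
    by_cases hz : ‖z‖ < R
    · rw [Set.indicator_of_mem (mem_ball_zero_iff.mpr hz), Set.indicator_of_mem (mem_Iio.mpr hz)]
    · rw [Set.indicator_of_notMem (fun h => hz (mem_ball_zero_iff.mp h)),
        Set.indicator_of_notMem (fun h => hz (mem_Iio.mp h))]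
  rw [h1, lintegral_radial _ hfm]
  refine mul_le_mul_right ?_ _
  have h2 : ∫⁻ r in Ioi (0:ℝ), ENNReal.ofReal r *
        (Iio R).indicator (fun r : ℝ => ENNReal.ofReal (r ^ (-s))) r =
      ∫⁻ r in Ioo (0:ℝ) R, ENNReal.ofReal (r ^ (1-s)) := by
    have : ∀ r : ℝ, ENNReal.ofReal r *
        (Iio R).indicator (fun r : ℝ => ENNReal.ofReal (r ^ (-s))) r =
        (Iio R).indicator (fun r : ℝ => ENNReal.ofReal r * ENNReal.ofReal (r ^ (-s))) r := by
      intro r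
      by_cases h : r ∈ Iio R <;> simp [Set.indicator_apply, h]
    rw [lintegral_congr this, lintegral_indicator measurableSet_Iio,
      Measure.restrict_restrict measurableSet_Iio, Iio_inter_Ioi]
    refine setLIntegral_congr_fun measurableSet_Ioo (fun r hr => ?_)
    rw [← ENNReal.ofReal_mul hr.1.le]
    congr 1
    rw [show (1:ℝ) - s = 1 + (-s) by ring, Real.rpow_add hr.1, Real.rpow_one]
  rw [h2]
  have hint : IntegrableOn (fun r : ℝ => r ^ (1-s)) (Ioo 0 R) := by
    rw [← intervalIntegrable_iff_integrableOn_Ioo_of_le hR.le]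
    exact intervalIntegral.intervalIntegrable_rpow' (by linarith)
  rw [← ofReal_integral_eq_lintegral_ofReal hint
    (((ae_restrict_mem measurableSet_Ioo).mono fun r hr => Real.rpow_nonneg hr.1.le _))]
  refine ENNReal.ofReal_le_ofReal ?_
  have : ∫ r in Ioo (0:ℝ) R, r ^ (1-s) = (R ^ (2-s) - 0 ^ (2-s)) / (2-s) := by
    rw [← integral_Ioc_eq_integral_Ioo, ← intervalIntegral.integral_of_le hR.le,
      integral_rpow (Or.inl (by linarith)), show (1:ℝ)-s+1 = 2-s by ring]
  rw [this, Real.zero_rpow (by linarith : (2:ℝ) - s ≠ 0)]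
  simp

lemma lint_compl_le {s R : ℝ} (hs : 2 < s) (hR : 0 < R) :
    ∫⁻ z in (ball (0:ℂ) R)ᶜ, ENNReal.ofReal (‖z‖ ^ (-s)) ≤
      sphC * ENNReal.ofReal (R ^ (2-s) / (s-2)) := by
  have hfm : Measurable ((Ici R).indicator (fun r : ℝ => ENNReal.ofReal (r ^ (-s)))) :=
    Measurable.indicator (by fun_prop) measurableSet_Ici
  have h1 : ∫⁻ z in (ball (0:ℂ) R)ᶜ, ENNReal.ofReal (‖z‖ ^ (-s)) =
      ∫⁻ z : ℂ, (Ici R).indicator (fun r : ℝ => ENNReal.ofReal (r ^ (-s))) ‖z‖ := by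
    rw [← lintegral_indicator measurableSet_ball.compl]
    refine lintegral_congr fun z => ?_
    by_cases hz : R ≤ ‖z‖
    · rw [Set.indicator_of_mem (by simpa [mem_ball_zero_iff] using not_lt.mpr hz),
        Set.indicator_of_mem (mem_Ici.mpr hz)]
    · rw [Set.indicator_of_notMem (by simpa [mem_ball_zero_iff] using not_le.mp hz),
        Set.indicator_of_notMem (fun h => hz (mem_Ici.mp h))]
  rw [h1, lintegral_radial _ hfm]
  refine mul_le_mul_right ?_ _
  have h2 : ∫⁻ r in Ioi (0:ℝ), ENNReal.ofReal r *
        (Ici R).indicator (fun r : ℝ => ENNReal.ofReal (r ^ (-s))) r =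
      ∫⁻ r in Ioi R, ENNReal.ofReal (r ^ (1-s)) := by
    have : ∀ r : ℝ, ENNReal.ofReal r *
        (Ici R).indicator (fun r : ℝ => ENNReal.ofReal (r ^ (-s))) r =
        (Ici R).indicator (fun r : ℝ => ENNReal.ofReal r * ENNReal.ofReal (r ^ (-s))) r := by
      intro r
      by_cases h : r ∈ Ici R <;> simp [Set.indicator_apply, h]
    rw [lintegral_congr this, lintegral_indicator measurableSet_Ici,
      Measure.restrict_restrict measurableSet_Ici,
      show Ici R ∩ Ioi (0:ℝ) = Ici R from inter_eq_left.mpr fun x hx => lt_of_lt_of_le hR hx,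
      ← Measure.restrict_congr_set Ioi_ae_eq_Ici]
    refine setLIntegral_congr_fun measurableSet_Ioi (fun r hr => ?_)
    have hr0 : (0:ℝ) < r := lt_trans hR hr
    rw [← ENNReal.ofReal_mul hr0.le]
    congr 1
    rw [show (1:ℝ) - s = 1 + (-s) by ring, Real.rpow_add hr0, Real.rpow_one]
  rw [h2]
  have hint : IntegrableOn (fun r : ℝ => r ^ (1-s)) (Ioi R) :=
    integrableOn_Ioi_rpow_of_lt (by linarith) hR
  rw [← ofReal_integral_eq_lintegral_ofReal hint
    (((ae_restrict_mem measurableSet_Ioi).mono fun r hr =>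
      Real.rpow_nonneg (le_of_lt (lt_trans hR hr)) _))]
  refine ENNReal.ofReal_le_ofReal ?_
  rw [integral_Ioi_rpow_of_lt (by linarith) hR]
  have h3 : (1:ℝ) - s + 1 = 2 - s := by ring
  rw [h3, show (s-2 : ℝ) = -(2-s) by ring, div_neg, ← neg_div]

noncomputable def Cq (q : ℝ) : ℝ :=
  2^q * 3^(2-q) / (2-q) + 2^q * 2^(2-q) / (2-q) + 2^(2-q) / (2*q-2)

lemma Cq_pos {q : ℝ} (hq1 : 1 < q) (hq2 : q < 2) : 0 < Cq q := by
  have h1 : (0:ℝ) < 2 - q := by linarith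
  have h2 : (0:ℝ) < 2*q - 2 := by linarith
  have p1 : (0:ℝ) < 2^q := Real.rpow_pos_of_pos (by norm_num) _
  have p2 : (0:ℝ) < 3^(2-q) := Real.rpow_pos_of_pos (by norm_num) _
  have p3 : (0:ℝ) < 2^(2-q) := Real.rpow_pos_of_pos (by norm_num) _
  have := div_pos (mul_pos p1 p2) h1
  have := div_pos (mul_pos p1 p3) h1
  have := div_pos p3 h2
  unfold Cq; linarith

lemma lint_g_le {q : ℝ} (hq1 : 1 < q) (hq2 : q < 2) (a : ℂ) :
    ∫⁻ z : ℂ, (‖(z - a)⁻¹ - z⁻¹‖₊ : ENNReal) ^ q ≤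
      sphC * ENNReal.ofReal (Cq q * ‖a‖ ^ (2 - q)) := by
  have hq0 : (0:ℝ) < q := by linarith
  rcases eq_or_ne a 0 with rfl | ha
  · simp [ENNReal.zero_rpow_of_pos hq0]
  have hna : 0 < ‖a‖ := norm_pos_iff.mpr ha
  set na := ‖a‖ with hnadef
  set R := 2 * na with hRdef
  have hR : 0 < R := by positivity
  -- global pointwise bound
  have hpt : ∀ z : ℂ, (‖(z - a)⁻¹ - z⁻¹‖₊ : ENNReal) ^ q ≤
      ENNReal.ofReal (2^q * ‖z - a‖ ^ (-q)) + ENNReal.ofReal (2^q * ‖z‖ ^ (-q)) := by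
    intro z
    have hb : ‖(z - a)⁻¹ - z⁻¹‖ ^ q ≤ 2^q * ‖z - a‖ ^ (-q) + 2^q * ‖z‖ ^ (-q) := by
      set x := ‖z - a‖⁻¹ with hx
      set y := ‖z‖⁻¹ with hy
      have hx0 : 0 ≤ x := inv_nonneg.mpr (norm_nonneg _)
      have hy0 : 0 ≤ y := inv_nonneg.mpr (norm_nonneg _)
      have h1 : ‖(z - a)⁻¹ - z⁻¹‖ ≤ x + y := by
        refine (norm_sub_le _ _).trans ?_
        rw [norm_inv, norm_inv]
      have h2 : ‖(z - a)⁻¹ - z⁻¹‖ ^ q ≤ (x + y) ^ q :=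
        Real.rpow_le_rpow (norm_nonneg _) h1 hq0.le
      have h3 : (x + y) ^ q ≤ (2 * max x y) ^ q := by
        refine Real.rpow_le_rpow (by positivity) ?_ hq0.le
        rcases le_total x y with h | h
        · rw [max_eq_right h]; linarith
        · rw [max_eq_left h]; linarith
      have h4 : (2 * max x y) ^ q = 2^q * (max x y)^q :=
        Real.mul_rpow (by norm_num) (le_max_iff.mpr (Or.inl hx0))
      have h5 : (max x y) ^ q ≤ x^q + y^q := by
        rcases le_total x y with h | h
        · rw [max_eq_right h]
          exact le_add_of_nonneg_left (Real.rpow_nonneg hx0 _)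
        · rw [max_eq_left h]
          exact le_add_of_nonneg_right (Real.rpow_nonneg hy0 _)
      have hxq : x ^ q = ‖z - a‖ ^ (-q) := by
        rw [hx, Real.inv_rpow (norm_nonneg _), ← Real.rpow_neg (norm_nonneg _)]
      have hyq : y ^ q = ‖z‖ ^ (-q) := by
        rw [hy, Real.inv_rpow (norm_nonneg _), ← Real.rpow_neg (norm_nonneg _)]
      calc ‖(z - a)⁻¹ - z⁻¹‖ ^ q ≤ 2^q * (max x y)^q := by rw [← h4]; exact h2.trans h3
        _ ≤ 2^q * (x^q + y^q) := by
            refine mul_le_mul_of_nonneg_left h5 (by positivity)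
        _ = 2^q * ‖z - a‖ ^ (-q) + 2^q * ‖z‖ ^ (-q) := by rw [hxq, hyq]; ring
    calc (‖(z - a)⁻¹ - z⁻¹‖₊ : ENNReal) ^ q
        = ENNReal.ofReal (‖(z - a)⁻¹ - z⁻¹‖ ^ q) := by
          rw [← enorm_eq_nnnorm, ← ofReal_norm,
            ENNReal.ofReal_rpow_of_nonneg (norm_nonneg _) hq0.le]
      _ ≤ ENNReal.ofReal (2^q * ‖z - a‖ ^ (-q) + 2^q * ‖z‖ ^ (-q)) :=
          ENNReal.ofReal_le_ofReal hb
      _ = _ := ENNReal.ofReal_add (by positivity) (by positivity)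
  -- measurability helpers
  have hm1 : Measurable fun z : ℂ => ENNReal.ofReal (2^q * ‖z - a‖ ^ (-q)) := by fun_prop
  have hm2 : Measurable fun z : ℂ => ENNReal.ofReal (2^q * ‖z‖ ^ (-q)) := by fun_prop
  -- ball piece
  have hball : ∫⁻ z in ball (0:ℂ) R, (‖(z - a)⁻¹ - z⁻¹‖₊ : ENNReal) ^ q ≤
      sphC * (ENNReal.ofReal (2^q * ((3*na) ^ (2-q) / (2-q))) +
        ENNReal.ofReal (2^q * (R ^ (2-q) / (2-q)))) := by
    have step1 : ∫⁻ z in ball (0:ℂ) R, (‖(z - a)⁻¹ - z⁻¹‖₊ : ENNReal) ^ q ≤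
        ∫⁻ z in ball (0:ℂ) R, (ENNReal.ofReal (2^q * ‖z - a‖ ^ (-q)) +
          ENNReal.ofReal (2^q * ‖z‖ ^ (-q))) :=
      setLIntegral_mono (hm1.add hm2) fun z _ => hpt z
    have step2 : ∫⁻ z in ball (0:ℂ) R, ENNReal.ofReal (2^q * ‖z - a‖ ^ (-q)) ≤
        sphC * ENNReal.ofReal (2^q * ((3*na) ^ (2-q) / (2-q))) := by
      have subset : ball (0:ℂ) R ⊆ ball a (3*na) := by
        intro z hz
        rw [mem_ball_zero_iff] at hz
        rw [mem_ball, dist_eq_norm]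
        calc ‖z - a‖ ≤ ‖z‖ + ‖a‖ := norm_sub_le _ _
          _ < 3 * na := by rw [hRdef] at hz; linarith
      have trans1 : ∫⁻ z in ball a (3*na), ENNReal.ofReal (‖z - a‖ ^ (-q)) =
          ∫⁻ z in ball (0:ℂ) (3*na), ENNReal.ofReal (‖z‖ ^ (-q)) := by
        rw [← lintegral_indicator measurableSet_ball, ← lintegral_indicator measurableSet_ball]
        have : ∀ z : ℂ, (ball a (3*na)).indicator
            (fun z => ENNReal.ofReal (‖z - a‖ ^ (-q))) z =
            (ball (0:ℂ) (3*na)).indicator (fun w => ENNReal.ofReal (‖w‖ ^ (-q))) (z + (-a)) := by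
          intro z
          by_cases hz : z ∈ ball a (3*na)
          · rw [Set.indicator_of_mem hz, Set.indicator_of_mem (by
              rw [mem_ball_zero_iff]; rw [mem_ball, dist_eq_norm] at hz
              simpa [sub_eq_add_neg] using hz)]
            simp [sub_eq_add_neg]
          · rw [Set.indicator_of_notMem hz, Set.indicator_of_notMem (fun h => hz (by
              rw [mem_ball_zero_iff] at h; rw [mem_ball, dist_eq_norm]
              simpa [sub_eq_add_neg] using h))]
        rw [lintegral_congr this,
          lintegral_add_right_eq_self ((ball (0:ℂ) (3*na)).indicator
            (fun w => ENNReal.ofReal (‖w‖ ^ (-q)))) (-a)]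
      calc ∫⁻ z in ball (0:ℂ) R, ENNReal.ofReal (2^q * ‖z - a‖ ^ (-q))
          = ENNReal.ofReal (2^q) * ∫⁻ z in ball (0:ℂ) R, ENNReal.ofReal (‖z - a‖ ^ (-q)) := by
            rw [← lintegral_const_mul _ (by fun_prop)]
            refine lintegral_congr fun z => ?_
            rw [← ENNReal.ofReal_mul (by positivity)]
        _ ≤ ENNReal.ofReal (2^q) * ∫⁻ z in ball a (3*na), ENNReal.ofReal (‖z - a‖ ^ (-q)) :=
            mul_le_mul_right (lintegral_mono_set subset) _
        _ = ENNReal.ofReal (2^q) * ∫⁻ z in ball (0:ℂ) (3*na), ENNReal.ofReal (‖z‖ ^ (-q)) := by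
            rw [trans1]
        _ ≤ ENNReal.ofReal (2^q) * (sphC * ENNReal.ofReal ((3*na) ^ (2-q) / (2-q))) :=
            mul_le_mul_right (lint_ball_le hq0 hq2 (by positivity)) _
        _ = sphC * ENNReal.ofReal (2^q * ((3*na) ^ (2-q) / (2-q))) := by
            rw [ENNReal.ofReal_mul (by positivity)]; ring
    have step3 : ∫⁻ z in ball (0:ℂ) R, ENNReal.ofReal (2^q * ‖z‖ ^ (-q)) ≤
        sphC * ENNReal.ofReal (2^q * (R ^ (2-q) / (2-q))) := by
      calc ∫⁻ z in ball (0:ℂ) R, ENNReal.ofReal (2^q * ‖z‖ ^ (-q))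
          = ENNReal.ofReal (2^q) * ∫⁻ z in ball (0:ℂ) R, ENNReal.ofReal (‖z‖ ^ (-q)) := by
            rw [← lintegral_const_mul _ (by fun_prop)]
            refine lintegral_congr fun z => ?_
            rw [← ENNReal.ofReal_mul (by positivity)]
        _ ≤ ENNReal.ofReal (2^q) * (sphC * ENNReal.ofReal (R ^ (2-q) / (2-q))) :=
            mul_le_mul_right (lint_ball_le hq0 hq2 hR) _
        _ = sphC * ENNReal.ofReal (2^q * (R ^ (2-q) / (2-q))) := by
            rw [ENNReal.ofReal_mul (by positivity)]; ring
    calc ∫⁻ z in ball (0:ℂ) R, (‖(z - a)⁻¹ - z⁻¹‖₊ : ENNReal) ^ q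
        ≤ ∫⁻ z in ball (0:ℂ) R, (ENNReal.ofReal (2^q * ‖z - a‖ ^ (-q)) +
            ENNReal.ofReal (2^q * ‖z‖ ^ (-q))) := step1
      _ = (∫⁻ z in ball (0:ℂ) R, ENNReal.ofReal (2^q * ‖z - a‖ ^ (-q))) +
          ∫⁻ z in ball (0:ℂ) R, ENNReal.ofReal (2^q * ‖z‖ ^ (-q)) :=
          lintegral_add_left hm1 _
      _ ≤ _ := by rw [mul_add]; exact add_le_add step2 step3
  -- complement piece
  have hcompl : ∫⁻ z in (ball (0:ℂ) R)ᶜ, (‖(z - a)⁻¹ - z⁻¹‖₊ : ENNReal) ^ q ≤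
      sphC * ENNReal.ofReal ((2*na)^q * (R ^ (2-2*q) / (2*q-2))) := by
    have hpt2 : ∀ z ∈ (ball (0:ℂ) R)ᶜ, (‖(z - a)⁻¹ - z⁻¹‖₊ : ENNReal) ^ q ≤
        ENNReal.ofReal ((2*na)^q * ‖z‖ ^ (-(2*q))) := by
      intro z hz
      rw [mem_compl_iff, mem_ball_zero_iff, not_lt] at hz
      have hz0 : 0 < ‖z‖ := lt_of_lt_of_le hR hz
      have hza : na ≤ ‖z‖ / 2 := by rw [hRdef] at hz; linarith
      have hzsub : ‖z‖ / 2 ≤ ‖z - a‖ := by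
        have := norm_sub_norm_le z a
        linarith [this]
      have hzsub0 : (0:ℝ) < ‖z - a‖ := lt_of_lt_of_le (by linarith) hzsub
      have hzne : z ≠ 0 := norm_pos_iff.mp hz0
      have hzane : z - a ≠ 0 := norm_pos_iff.mp hzsub0
      have hg : (z - a)⁻¹ - z⁻¹ = a * ((z - a)⁻¹ * z⁻¹) := by
        field_simp
        ring
      have hnormg : ‖(z - a)⁻¹ - z⁻¹‖ ≤ 2 * na * (‖z‖⁻¹ * ‖z‖⁻¹) := by
        rw [hg, norm_mul, norm_mul, norm_inv, norm_inv]
        have h1 : ‖z - a‖⁻¹ ≤ 2 * ‖z‖⁻¹ := by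
          have e : (‖z‖/2)⁻¹ = 2 * ‖z‖⁻¹ := by
            rw [inv_div, div_eq_mul_inv]
          rw [← e]
          exact inv_anti₀ (by positivity) hzsub
        calc na * (‖z - a‖⁻¹ * ‖z‖⁻¹) ≤ na * ((2 * ‖z‖⁻¹) * ‖z‖⁻¹) := by
              refine mul_le_mul_of_nonneg_left ?_ (norm_nonneg _)
              exact mul_le_mul_of_nonneg_right h1 (by positivity)
          _ = 2 * na * (‖z‖⁻¹ * ‖z‖⁻¹) := by ring
      have hreal : ‖(z - a)⁻¹ - z⁻¹‖ ^ q ≤ (2*na)^q * ‖z‖ ^ (-(2*q)) := by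
        have e1 : ‖z‖⁻¹ * ‖z‖⁻¹ = ‖z‖ ^ (-(2:ℝ)) := by
          rw [Real.rpow_neg hz0.le, show ((2:ℝ)) = ((2:ℕ):ℝ) by norm_num,
            Real.rpow_natCast, pow_two, mul_inv]
        calc ‖(z - a)⁻¹ - z⁻¹‖ ^ q ≤ (2 * na * (‖z‖⁻¹ * ‖z‖⁻¹)) ^ q :=
              Real.rpow_le_rpow (norm_nonneg _) hnormg hq0.le
          _ = (2*na)^q * (‖z‖ ^ (-(2:ℝ))) ^ q := by
              rw [e1, Real.mul_rpow (by positivity) (Real.rpow_nonneg hz0.le _)]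
          _ = (2*na)^q * ‖z‖ ^ (-(2*q)) := by
              rw [← Real.rpow_mul hz0.le]; ring_nf
      calc (‖(z - a)⁻¹ - z⁻¹‖₊ : ENNReal) ^ q
          = ENNReal.ofReal (‖(z - a)⁻¹ - z⁻¹‖ ^ q) := by
            rw [← enorm_eq_nnnorm, ← ofReal_norm,
              ENNReal.ofReal_rpow_of_nonneg (norm_nonneg _) hq0.le]
        _ ≤ _ := ENNReal.ofReal_le_ofReal hreal
    calc ∫⁻ z in (ball (0:ℂ) R)ᶜ, (‖(z - a)⁻¹ - z⁻¹‖₊ : ENNReal) ^ q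
        ≤ ∫⁻ z in (ball (0:ℂ) R)ᶜ, ENNReal.ofReal ((2*na)^q * ‖z‖ ^ (-(2*q))) :=
          setLIntegral_mono (by fun_prop) hpt2
      _ = ENNReal.ofReal ((2*na)^q) * ∫⁻ z in (ball (0:ℂ) R)ᶜ,
            ENNReal.ofReal (‖z‖ ^ (-(2*q))) := by
          rw [← lintegral_const_mul _ (by fun_prop)]
          refine lintegral_congr fun z => ?_
          rw [← ENNReal.ofReal_mul (by positivity)]
      _ ≤ ENNReal.ofReal ((2*na)^q) * (sphC * ENNReal.ofReal (R ^ (2-2*q) / (2*q-2))) :=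
          mul_le_mul_right (lint_compl_le (by linarith) hR) _
      _ = sphC * ENNReal.ofReal ((2*na)^q * (R ^ (2-2*q) / (2*q-2))) := by
          rw [ENNReal.ofReal_mul (by positivity)]; ring
  -- combine
  rw [← lintegral_add_compl (fun z : ℂ => (‖(z - a)⁻¹ - z⁻¹‖₊ : ENNReal) ^ q)
    (measurableSet_ball (x := (0:ℂ)) (ε := R))]
  refine le_trans (add_le_add hball hcompl) ?_
  have n1 : (0:ℝ) ≤ 2^q * ((3*na) ^ (2-q) / (2-q)) :=
    mul_nonneg (by positivity) (div_nonneg (by positivity) (by linarith))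
  have n2 : (0:ℝ) ≤ 2^q * (R ^ (2-q) / (2-q)) :=
    mul_nonneg (by positivity) (div_nonneg (by positivity) (by linarith))
  have n3 : (0:ℝ) ≤ (2*na)^q * (R ^ (2-2*q) / (2*q-2)) :=
    mul_nonneg (by positivity) (div_nonneg (by positivity) (by linarith))
  rw [← mul_add, ← ENNReal.ofReal_add n1 n2, ← ENNReal.ofReal_add (by linarith) n3]
  refine mul_le_mul_right (ENNReal.ofReal_le_ofReal (le_of_eq ?_)) _
  have e2 : (3*na) ^ (2-q) = 3^(2-q) * na^(2-q) := Real.mul_rpow (by norm_num) hna.le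
  have e3 : R ^ (2-q) = 2^(2-q) * na^(2-q) := by rw [hRdef]; exact Real.mul_rpow (by norm_num) hna.le
  have e4 : (2*na)^q * R ^ (2-2*q) = 2^(2-q) * na^(2-q) := by
    rw [hRdef, ← Real.rpow_add (by positivity : (0:ℝ) < 2*na),
      show q + (2-2*q) = 2-q by ring]
    exact Real.mul_rpow (by norm_num) hna.le
  rw [show (2*na)^q * (R ^ (2-2*q) / (2*q-2)) = ((2*na)^q * R ^ (2-2*q)) / (2*q-2) by ring, e4]
  rw [e2, e3, Cq]
  ring

noncomputable def Kq (q : ℝ) : ℝ := (sphC.toReal * Cq q) ^ (1/q)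

lemma lint_G_le {q : ℝ} (hq1 : 1 < q) (hq2 : q < 2) (a b : ℂ) :
    ∫⁻ z : ℂ, (‖(z - a)⁻¹ - (z - b)⁻¹‖₊ : ENNReal) ^ q ≤
      sphC * ENNReal.ofReal (Cq q * ‖a - b‖ ^ (2 - q)) := by
  refine le_trans (le_of_eq ?_) (lint_g_le hq1 hq2 (a - b))
  rw [← lintegral_add_right_eq_self
    (fun w : ℂ => (‖(w - (a - b))⁻¹ - w⁻¹‖₊ : ENNReal) ^ q) (-b)]
  refine lintegral_congr fun z => ?_
  show _ = (‖(z + -b - (a - b))⁻¹ - (z + -b)⁻¹‖₊ : ENNReal) ^ q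
  rw [show z + -b - (a - b) = z - a from by ring, show z + -b = z - b from by ring]

lemma measurable_G (a b : ℂ) : Measurable fun z : ℂ => (z - a)⁻¹ - (z - b)⁻¹ :=
  ((measurable_id.sub_const a).inv).sub ((measurable_id.sub_const b).inv)

lemma eLpNorm_G_le {q : ℝ} (hq1 : 1 < q) (hq2 : q < 2) (a b : ℂ) :
    eLpNorm (fun z : ℂ => (z - a)⁻¹ - (z - b)⁻¹) (ENNReal.ofReal q) volume ≤
      ENNReal.ofReal (Kq q * ‖a - b‖ ^ ((2 - q)/q)) := by
  have hq0 : (0:ℝ) < q := by linarith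
  rw [eLpNorm_eq_lintegral_rpow_enorm_toReal (by simp [ENNReal.ofReal_eq_zero]; linarith)
    ENNReal.ofReal_ne_top, ENNReal.toReal_ofReal hq0.le]
  refine le_trans (ENNReal.rpow_le_rpow (lint_G_le hq1 hq2 a b) (by positivity)) (le_of_eq ?_)
  rw [show sphC = ENNReal.ofReal sphC.toReal from (ENNReal.ofReal_toReal sphC_ne_top).symm,
    ← ENNReal.ofReal_mul ENNReal.toReal_nonneg,
    ENNReal.ofReal_rpow_of_nonneg (mul_nonneg ENNReal.toReal_nonneg
      (mul_nonneg (Cq_pos hq1 hq2).le (Real.rpow_nonneg (norm_nonneg _) _))) (by positivity)]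
  congr 1
  rw [show sphC.toReal * (Cq q * ‖a - b‖ ^ (2 - q)) =
      (sphC.toReal * Cq q) * ‖a - b‖ ^ (2 - q) from by ring,
    Real.mul_rpow (mul_nonneg ENNReal.toReal_nonneg (Cq_pos hq1 hq2).le)
      (Real.rpow_nonneg (norm_nonneg _) _),
    ← Real.rpow_mul (norm_nonneg _), Kq]
  congr 1
  ring

lemma memLp_G {q : ℝ} (hq1 : 1 < q) (hq2 : q < 2) (a b : ℂ) :
    MemLp (fun z : ℂ => (z - a)⁻¹ - (z - b)⁻¹) (ENNReal.ofReal q) volume :=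
  ⟨(measurable_G a b).aestronglyMeasurable,
    lt_of_le_of_lt (eLpNorm_G_le hq1 hq2 a b) ENNReal.ofReal_lt_top⟩

theorem holder_continuity_of_P_operator (p : ℝ) (hp : 2 < p) :
    ∃ K : ℝ, 0 < K ∧ ∀ h : ℂ → ℂ, Measurable h → MemLp h (ENNReal.ofReal p) volume →
      (∀ ζ : ℂ, Integrable (fun z : ℂ => h z * (1 / (z - ζ) - 1 / z)) volume) ∧
      ∀ ζ₁ ζ₂ : ℂ,
        ‖((-(1 / (Real.pi : ℂ)) * ∫ z : ℂ, h z * (1 / (z - ζ₁) - 1 / z)) -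
              (-(1 / (Real.pi : ℂ)) * ∫ z : ℂ, h z * (1 / (z - ζ₂) - 1 / z)))‖ ≤
          K * (eLpNorm h (ENNReal.ofReal p) volume).toReal *
            ‖ζ₁ - ζ₂‖ ^ (1 - 2 / p) := by
  have hp1 : (1:ℝ) < p := by linarith
  have hp0 : (0:ℝ) < p := by linarith
  have hpm1 : (0:ℝ) < p - 1 := by linarith
  set q := p / (p - 1) with hqdef
  have hq1 : 1 < q := by rw [hqdef, lt_div_iff₀ hpm1]; linarith
  have hq2 : q < 2 := by rw [hqdef, div_lt_iff₀ hpm1]; linarith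
  have hq0 : (0:ℝ) < q := by linarith
  have hconj : 1/p + 1/q = 1 := by rw [hqdef]; field_simp; ring
  have hexp : (2 - q)/q = 1 - 2/p := by
    rw [hqdef]; field_simp; ring
  have hE : (1 : ENNReal) / 1 = 1 / ENNReal.ofReal p + 1 / ENNReal.ofReal q := by
    rw [one_div, one_div, one_div, ← ENNReal.ofReal_inv_of_pos hp0,
      ← ENNReal.ofReal_inv_of_pos hq0, ← ENNReal.ofReal_add (by positivity) (by positivity)]
    rw [show p⁻¹ + q⁻¹ = 1 from by rw [← one_div, ← one_div]; exact hconj]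
    simp
  haveI : ENNReal.HolderTriple (ENNReal.ofReal p) (ENNReal.ofReal q) 1 :=
    ⟨by simpa [one_div] using hE.symm⟩
  have hKq_nonneg : 0 ≤ Kq q :=
    Real.rpow_nonneg (mul_nonneg ENNReal.toReal_nonneg (Cq_pos hq1 hq2).le) _
  refine ⟨1 / Real.pi * Kq q + 1, by positivity, ?_⟩
  intro h hmeas hmem
  have hint : ∀ a b : ℂ, Integrable (fun z : ℂ => h z * ((z - a)⁻¹ - (z - b)⁻¹)) volume := by
    intro a b
    have hsm : MemLp (h • fun z : ℂ => (z - a)⁻¹ - (z - b)⁻¹) 1 volume :=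
      (memLp_G hq1 hq2 a b).smul hmem
    exact (memLp_one_iff_integrable.mp hsm).congr
      (ae_of_all _ fun z => by rw [Pi.smul_apply', smul_eq_mul])
  constructor
  · intro ζ
    have := hint ζ 0
    simpa [one_div, sub_zero] using this
  intro ζ₁ ζ₂
  have hI1 : Integrable (fun z : ℂ => h z * (1 / (z - ζ₁) - 1 / z)) volume := by
    simpa [one_div, sub_zero] using hint ζ₁ 0
  have hI2 : Integrable (fun z : ℂ => h z * (1 / (z - ζ₂) - 1 / z)) volume := by
    simpa [one_div, sub_zero] using hint ζ₂ 0
  have hGmem := memLp_G hq1 hq2 ζ₁ ζ₂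
  have hintHG := hint ζ₁ ζ₂
  have hdiff : (∫ z : ℂ, h z * (1 / (z - ζ₁) - 1 / z)) -
      (∫ z : ℂ, h z * (1 / (z - ζ₂) - 1 / z)) =
      ∫ z : ℂ, h z * ((z - ζ₁)⁻¹ - (z - ζ₂)⁻¹) := by
    rw [← integral_sub hI1 hI2]
    refine integral_congr_ae (ae_of_all _ fun z => ?_)
    simp only [one_div]
    ring
  have habs : ‖(-(1 / (Real.pi : ℂ)))‖ = 1 / Real.pi := by
    simp [abs_of_pos Real.pi_pos]
  have hnorm_le : ‖∫ z : ℂ, h z * ((z - ζ₁)⁻¹ - (z - ζ₂)⁻¹)‖ ≤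
      (eLpNorm h (ENNReal.ofReal p) volume).toReal *
        (Kq q * ‖ζ₁ - ζ₂‖ ^ ((2 - q)/q)) := by
    have step1 : ‖∫ z : ℂ, h z * ((z - ζ₁)⁻¹ - (z - ζ₂)⁻¹)‖ ≤
        ∫ z : ℂ, ‖h z * ((z - ζ₁)⁻¹ - (z - ζ₂)⁻¹)‖ := norm_integral_le_integral_norm _
    have step2 : ∫ z : ℂ, ‖h z * ((z - ζ₁)⁻¹ - (z - ζ₂)⁻¹)‖ =
        (eLpNorm (fun z : ℂ => h z * ((z - ζ₁)⁻¹ - (z - ζ₂)⁻¹)) 1 volume).toReal := by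
      rw [eLpNorm_one_eq_lintegral_enorm, ← ofReal_integral_norm_eq_lintegral_enorm hintHG,
        ENNReal.toReal_ofReal (integral_nonneg fun z => norm_nonneg _)]
    have step3 : eLpNorm (fun z : ℂ => h z * ((z - ζ₁)⁻¹ - (z - ζ₂)⁻¹)) 1 volume ≤
        eLpNorm h (ENNReal.ofReal p) volume *
          eLpNorm (fun z : ℂ => (z - ζ₁)⁻¹ - (z - ζ₂)⁻¹) (ENNReal.ofReal q) volume := by
      have e : eLpNorm (fun z : ℂ => h z * ((z - ζ₁)⁻¹ - (z - ζ₂)⁻¹)) 1 volume =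
          eLpNorm (h • fun z : ℂ => (z - ζ₁)⁻¹ - (z - ζ₂)⁻¹) 1 volume :=
        eLpNorm_congr_ae (ae_of_all _ fun z => by rw [Pi.smul_apply', smul_eq_mul])
      rw [e]
      exact eLpNorm_smul_le_mul_eLpNorm hGmem.1 hmem.1
    have hfin : eLpNorm h (ENNReal.ofReal p) volume *
        eLpNorm (fun z : ℂ => (z - ζ₁)⁻¹ - (z - ζ₂)⁻¹) (ENNReal.ofReal q) volume ≠ ⊤ :=
      ENNReal.mul_ne_top hmem.2.ne hGmem.2.ne
    refine step1.trans ?_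
    rw [step2]
    calc (eLpNorm (fun z : ℂ => h z * ((z - ζ₁)⁻¹ - (z - ζ₂)⁻¹)) 1 volume).toReal
        ≤ (eLpNorm h (ENNReal.ofReal p) volume *
            eLpNorm (fun z : ℂ => (z - ζ₁)⁻¹ - (z - ζ₂)⁻¹) (ENNReal.ofReal q) volume).toReal :=
          ENNReal.toReal_mono hfin step3
      _ = (eLpNorm h (ENNReal.ofReal p) volume).toReal *
          (eLpNorm (fun z : ℂ => (z - ζ₁)⁻¹ - (z - ζ₂)⁻¹) (ENNReal.ofReal q) volume).toReal :=
          ENNReal.toReal_mul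
      _ ≤ (eLpNorm h (ENNReal.ofReal p) volume).toReal *
          (Kq q * ‖ζ₁ - ζ₂‖ ^ ((2 - q)/q)) := by
          refine mul_le_mul_of_nonneg_left ?_ ENNReal.toReal_nonneg
          refine le_trans (ENNReal.toReal_mono ENNReal.ofReal_ne_top
            (eLpNorm_G_le hq1 hq2 ζ₁ ζ₂)) ?_
          exact le_of_eq (ENNReal.toReal_ofReal
            (mul_nonneg hKq_nonneg (Real.rpow_nonneg (norm_nonneg _) _)))
  have hfactor : (-(1 / (Real.pi : ℂ)) * ∫ z : ℂ, h z * (1 / (z - ζ₁) - 1 / z)) -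
      (-(1 / (Real.pi : ℂ)) * ∫ z : ℂ, h z * (1 / (z - ζ₂) - 1 / z)) =
      -(1 / (Real.pi : ℂ)) * ((∫ z : ℂ, h z * (1 / (z - ζ₁) - 1 / z)) -
        (∫ z : ℂ, h z * (1 / (z - ζ₂) - 1 / z))) := by ring
  rw [hfactor, norm_mul, habs, hdiff]
  rw [← hexp]
  calc 1 / Real.pi * ‖∫ z : ℂ, h z * ((z - ζ₁)⁻¹ - (z - ζ₂)⁻¹)‖
      ≤ 1 / Real.pi * ((eLpNorm h (ENNReal.ofReal p) volume).toReal *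
          (Kq q * ‖ζ₁ - ζ₂‖ ^ ((2 - q)/q))) :=
        mul_le_mul_of_nonneg_left hnorm_le (by positivity)
    _ = (1 / Real.pi * Kq q) * (eLpNorm h (ENNReal.ofReal p) volume).toReal *
          ‖ζ₁ - ζ₂‖ ^ ((2 - q)/q) := by ring
    _ ≤ (1 / Real.pi * Kq q + 1) * (eLpNorm h (ENNReal.ofReal p) volume).toReal *
          ‖ζ₁ - ζ₂‖ ^ ((2 - q)/q) := by
        refine mul_le_mul_of_nonneg_right
          (mul_le_mul_of_nonneg_right (by linarith) ENNReal.toReal_nonneg)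
          (Real.rpow_nonneg (norm_nonneg _) _)
end
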